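/- If a finite directed graph G with all self-loops is a disjoint union of r cliques — i.e., its vertex set partitions into r sets, each of which is a subclique, with no edges between distinct parts — then ι(G) = ν₂(G) = λ(G) = κ(G) = r. -/

import Mathlib

open Finset
open Finset

/-- The independence number `ι(G)`: the largest `r` such that there are `r` distinct
vertices with no edge between any two distinct ones. -/
noncomputable def indepNumber {V : Type*} [Fintype V] (adj : V → V → Prop) : ℕ :=
  sSup {r : ℕ | ∃ f : Fin r → V, Function.Injective f ∧
    ∀ i j : Fin r, i ≠ j → ¬ adj (f i) (f j)}

/-- The maximum acyclic subgraph number `λ(G)`. -/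
noncomputable def acyclicNumber {V : Type*} [Fintype V] (adj : V → V → Prop) : ℕ :=
  sSup {r : ℕ | ∃ f : Fin r → V, Function.Injective f ∧
    ∀ i j : Fin r, j < i → ¬ adj (f i) (f j)}

/-- The clique covering number `κ(G)`: the least `r` such that the vertices can be
labelled by `Fin r` with every pair of equally-labelled vertices joined by an edge
(equivalently, the least size of a partition of `V` into subcliques). -/
noncomputable def cliqueCoverNumber {V : Type*} [Fintype V] (adj : V → V → Prop) : ℕ :=
  sInf {r : ℕ | ∃ P : V → Fin r, ∀ u v, P u = P v → adj u v}

/-- The quantity `ν₂(G)`: the supremum over positive vertex weightings `f` summing to 1 of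
`(∑_v f v / √(∑_{w ∈ I(v)} f w))²`. -/
noncomputable def nuTwo {V : Type*} [Fintype V] (adj : V → V → Prop) [DecidableRel adj] : ℝ :=
  sSup {x : ℝ | ∃ f : V → ℝ, (∀ v, 0 < f v) ∧ (∑ v, f v) = 1 ∧
    x = (∑ v, f v / Real.sqrt (∑ w ∈ Finset.univ.filter (fun w => adj w v), f w)) ^ 2}

/-- if a finite directed graph with all self-loops is a disjoint union of
`r` cliques — i.e. there is a surjective labelling `P : V → Fin r` such that `adj u v`
holds exactly when `P u = P v` — then `ι(G) = ν₂(G) = λ(G) = κ(G) = r`. -/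
theorem graph_invariants_of_disjoint_cliques (V : Type*) [Fintype V]
    (adj : V → V → Prop) [DecidableRel adj] (r : ℕ) (P : V → Fin r)
    (hsurj : Function.Surjective P)
    (hadj : ∀ u v, adj u v ↔ P u = P v) :
    indepNumber adj = r ∧ nuTwo adj = (r : ℝ) ∧
      acyclicNumber adj = r ∧ cliqueCoverNumber adj = r := by
  classical
  choose g hg using hsurj
  have hginj : Function.Injective g := fun i j h => by rw [← hg i, ← hg j, h]
  have hnoadj : ∀ i j : Fin r, i ≠ j → ¬ adj (g i) (g j) := by
    intro i j hij hadj'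
    have := (hadj _ _).mp hadj'
    rw [hg, hg] at this
    exact hij this
  refine ⟨?_, ?_, ?_, ?_⟩
  · -- indepNumber
    have hmem : r ∈ {r' : ℕ | ∃ f : Fin r' → V, Function.Injective f ∧
        ∀ i j : Fin r', i ≠ j → ¬ adj (f i) (f j)} := ⟨g, hginj, hnoadj⟩
    have hbd : ∀ s ∈ {r' : ℕ | ∃ f : Fin r' → V, Function.Injective f ∧
        ∀ i j : Fin r', i ≠ j → ¬ adj (f i) (f j)}, s ≤ r := by
      rintro s ⟨f, hf, hnadj⟩
      have : Function.Injective (P ∘ f) := by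
        intro i j h
        by_contra hij
        exact hnadj i j hij ((hadj _ _).mpr h)
      simpa using Fintype.card_le_of_injective _ this
    exact le_antisymm (csSup_le ⟨r, hmem⟩ hbd) (le_csSup ⟨r, hbd⟩ hmem)
  · -- nuTwo
    unfold nuTwo
    have hsurj : Function.Surjective P := fun k => ⟨g k, hg k⟩
    set T := {x : ℝ | ∃ f : V → ℝ, (∀ v, 0 < f v) ∧ (∑ v, f v) = 1 ∧
        x = (∑ v, f v / Real.sqrt (∑ w ∈ Finset.univ.filter (fun w => adj w v), f w)) ^ 2} with hT
    rcases Nat.eq_zero_or_pos r with hr | hr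
    · -- V empty, T empty
      subst hr
      have hVempty : IsEmpty V := Function.isEmpty P
      have : T = ∅ := by
        ext x
        simp only [hT, Set.mem_setOf_eq, Set.mem_empty_iff_false, iff_false]
        rintro ⟨f, -, hsum, -⟩
        rw [Finset.univ_eq_empty, Finset.sum_empty] at hsum
        exact one_ne_zero hsum.symm
      rw [this, Real.sSup_empty]; simp
    · have hrpos : (0:ℝ) < r := by exact_mod_cast hr
      -- key rewriting: for any f, the sum equals ∑ k, S f k / sqrt (S f k)
      have key : ∀ f : V → ℝ,
          (∑ v, f v / Real.sqrt (∑ w ∈ Finset.univ.filter (fun w => adj w v), f w))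
          = ∑ k : Fin r, Real.sqrt (∑ v ∈ univ.filter (fun v => P v = k), f v) := by
        intro f
        have h1 : ∀ v : V, (Finset.univ.filter (fun w => adj w v))
            = univ.filter (fun w => P w = P v) := by
          intro v; apply Finset.filter_congr; intro w _; simp [hadj]
        have h2 : (∑ v, f v / Real.sqrt (∑ w ∈ Finset.univ.filter (fun w => adj w v), f w))
            = ∑ v, f v / Real.sqrt (∑ w ∈ univ.filter (fun w => P w = P v), f w) := by
          apply Finset.sum_congr rfl; intro v _; rw [h1 v]
        rw [h2, ← Finset.sum_fiberwise univ P
          (fun v => f v / Real.sqrt (∑ w ∈ univ.filter (fun w => P w = P v), f w))]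
        apply Finset.sum_congr rfl
        intro k _
        have : ∀ v ∈ univ.filter (fun v => P v = k),
            f v / Real.sqrt (∑ w ∈ univ.filter (fun w => P w = P v), f w)
            = f v / Real.sqrt (∑ w ∈ univ.filter (fun w => P w = k), f w) := by
          intro v hv
          rw [(Finset.mem_filter.mp hv).2]
        rw [Finset.sum_congr rfl this, ← Finset.sum_div, Real.div_sqrt]
      -- membership: witness
      have hmem : (r : ℝ) ∈ T := by
        set N : Fin r → ℕ := fun k => (univ.filter (fun v => P v = k)).card with hN
        have hNpos : ∀ k, 0 < N k := by
          intro k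
          obtain ⟨v, hv⟩ := hsurj k
          exact Finset.card_pos.mpr ⟨v, by simp [hv]⟩
        refine ⟨fun v => 1 / (r * N (P v)), fun v => by
          have h1 : (0:ℝ) < (N (P v) : ℝ) := by exact_mod_cast hNpos (P v)
          positivity, ?_, ?_⟩
        · rw [← Finset.sum_fiberwise univ P (fun v => 1 / ((r:ℝ) * N (P v)))]
          have : ∀ k : Fin r, (∑ v ∈ univ.filter (fun v => P v = k),
              1 / ((r:ℝ) * N (P v))) = 1 / r := by
            intro k
            rw [Finset.sum_congr rfl (fun v hv => by
              rw [(Finset.mem_filter.mp hv).2])]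
            rw [Finset.sum_const, nsmul_eq_mul]
            have : (N k : ℝ) ≠ 0 := by exact_mod_cast (hNpos k).ne'
            field_simp
            rfl
          rw [Finset.sum_congr rfl (fun k _ => this k), Finset.sum_const]
          simp only [Finset.card_univ, Fintype.card_fin, nsmul_eq_mul]
          field_simp
        · rw [key]
          have : ∀ k : Fin r, (∑ v ∈ univ.filter (fun v => P v = k),
              1 / ((r:ℝ) * N (P v))) = 1 / r := by
            intro k
            rw [Finset.sum_congr rfl (fun v hv => by
              rw [(Finset.mem_filter.mp hv).2])]
            rw [Finset.sum_const, nsmul_eq_mul]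
            have : (N k : ℝ) ≠ 0 := by exact_mod_cast (hNpos k).ne'
            field_simp
            rfl
          rw [Finset.sum_congr rfl (fun k _ => by rw [this k])]
          rw [Finset.sum_const]
          simp only [Finset.card_univ, Fintype.card_fin, nsmul_eq_mul]
          rw [mul_pow, Real.sq_sqrt (by positivity)]
          field_simp
      -- bound
      have hbd : ∀ x ∈ T, x ≤ (r : ℝ) := by
        rintro x ⟨f, hfpos, hsum, rfl⟩
        rw [key]
        have hS : ∀ k : Fin r, 0 ≤ ∑ v ∈ univ.filter (fun v => P v = k), f v :=
          fun k => Finset.sum_nonneg (fun v _ => (hfpos v).le)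
        calc (∑ k : Fin r, Real.sqrt (∑ v ∈ univ.filter (fun v => P v = k), f v)) ^ 2
            ≤ (univ : Finset (Fin r)).card *
              ∑ k : Fin r, (Real.sqrt (∑ v ∈ univ.filter (fun v => P v = k), f v)) ^ 2 :=
              sq_sum_le_card_mul_sum_sq
          _ = (r : ℝ) := by
              rw [Finset.sum_congr rfl (fun k _ => Real.sq_sqrt (hS k)),
                Finset.sum_fiberwise univ P f, hsum]
              simp
      exact le_antisymm (csSup_le ⟨_, hmem⟩ hbd) (le_csSup ⟨_, hbd⟩ hmem)
  · -- acyclicNumber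
    have hmem : r ∈ {r' : ℕ | ∃ f : Fin r' → V, Function.Injective f ∧
        ∀ i j : Fin r', j < i → ¬ adj (f i) (f j)} :=
      ⟨g, hginj, fun i j hji => hnoadj i j hji.ne'⟩
    have hbd : ∀ s ∈ {r' : ℕ | ∃ f : Fin r' → V, Function.Injective f ∧
        ∀ i j : Fin r', j < i → ¬ adj (f i) (f j)}, s ≤ r := by
      rintro s ⟨f, hf, hnadj⟩
      have : Function.Injective (P ∘ f) := by
        intro i j h
        rcases lt_trichotomy i j with hij | hij | hij
        · exact absurd ((hadj _ _).mpr h.symm) (hnadj j i hij)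
        · exact hij
        · exact absurd ((hadj _ _).mpr h) (hnadj i j hij)
      simpa using Fintype.card_le_of_injective _ this
    exact le_antisymm (csSup_le ⟨r, hmem⟩ hbd) (le_csSup ⟨r, hbd⟩ hmem)
  · -- cliqueCoverNumber
    have hmem : r ∈ {r' : ℕ | ∃ P' : V → Fin r', ∀ u v, P' u = P' v → adj u v} :=
      ⟨P, fun u v h => (hadj u v).mpr h⟩
    refine le_antisymm (Nat.sInf_le hmem) (le_csInf ⟨r, hmem⟩ ?_)
    rintro s ⟨Q, hQ⟩
    have : Function.Injective (Q ∘ g) := by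
      intro i j h
      have := (hadj _ _).mp (hQ _ _ h)
      rwa [hg, hg] at this
    simpa using Fintype.card_le_of_injective _ this
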